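/- The supremum norm of the Varopoulos–Kaijser polynomial p_V(z₁,z₂,z₃) = z₁² + z₂² + z₃² − 2z₁z₂ − 2z₂z₃ − 2z₃z₁ over the closed unit polydisc 𝔻̄³ equals 5. -/

import Mathlib

/-- The Varopoulos–Kaijser polynomial. -/
noncomputable def pV (z : Fin 3 → ℂ) : ℂ :=
  z 0 ^ 2 + z 1 ^ 2 + z 2 ^ 2 - 2 * z 0 * z 1 - 2 * z 1 * z 2 - 2 * z 2 * z 0

noncomputable def qVK (a b c : ℂ) : ℂ :=
  a ^ 2 + b ^ 2 + c ^ 2 - 2 * a * b - 2 * b * c - 2 * c * a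

lemma keyVK (c r : ℝ) (hc : c^2 ≤ 1) (hr : r^2 ≤ 1) :
    (4*(1+c)^2 - 4*(1+c)*r + 1) * (4*(1-c)^2 + 4*(1-c)*r + 1) ≤ 25 := by
  nlinarith [sq_nonneg (c*r), sq_nonneg (c+r), sq_nonneg (c-r), sq_nonneg c, sq_nonneg r,
    sq_nonneg (c*r-1), sq_nonneg (c*r+1), sq_nonneg (c^2-r),
    mul_nonneg (sub_nonneg.2 hc) (sub_nonneg.2 hr), sq_nonneg (4*c^2 - 4*c*r +r), sq_nonneg (2*c - r)]

lemma norm_sq_eqVK (z : ℂ) : ‖z‖^2 = z.re^2 + z.im^2 := by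
  rw [Complex.sq_norm, Complex.normSq_apply]; ring

lemma normsq_oneVK {z : ℂ} (h : ‖z‖ = 1) : z.re ^ 2 + z.im ^ 2 = 1 := by
  rw [← norm_sq_eqVK, h]; norm_num

lemma conj_mul_oneVK {z : ℂ} (h : ‖z‖ = 1) : z * (starRingEnd ℂ) z = 1 := by
  rw [Complex.mul_conj]
  norm_cast
  rw [← Complex.sq_norm, h]; norm_num

lemma torusVK (a b c : ℂ) (ha : ‖a‖ = 1) (hb : ‖b‖ = 1) (hc : ‖c‖ = 1) :
    ‖qVK a b c‖ ≤ 5 := by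
  obtain ⟨u, hu⟩ := IsAlgClosed.exists_pow_nat_eq (a * b) (n := 2) (by norm_num)
  have hunorm : ‖u‖ = 1 := by
    have h2 : ‖u‖ ^ 2 = 1 := by rw [← norm_pow, hu, norm_mul, ha, hb]; ring
    nlinarith [norm_nonneg u]
  set v : ℂ := a * (starRingEnd ℂ) u with hv
  have hvnorm : ‖v‖ = 1 := by simp [hv, ha, hunorm]
  set w : ℂ := u * (starRingEnd ℂ) c with hwdef
  have hwnorm : ‖w‖ = 1 := by simp [hwdef, hunorm, hc]
  set cv : ℝ := v.re with hcv
  set sv : ℝ := v.im with hsv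
  set r : ℝ := w.re with hr
  set s : ℝ := w.im with hs
  have hv1 : cv ^ 2 + sv ^ 2 = 1 := normsq_oneVK hvnorm
  have hw1 : r ^ 2 + s ^ 2 = 1 := normsq_oneVK hwnorm
  have hA : a = u * v := by
    rw [hv]; linear_combination (-a) * conj_mul_oneVK hunorm
  have hcvj : (starRingEnd ℂ) v = (starRingEnd ℂ) a * u := by
    rw [hv]; simp [map_mul]
  have hB : b = u * (starRingEnd ℂ) v := by
    rw [hcvj]
    linear_combination (-(starRingEnd ℂ) a) * hu + (-b) * conj_mul_oneVK ha
  have hU : u = w * c := by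
    rw [hwdef]; linear_combination (-u) * conj_mul_oneVK hc
  have hVsum : v + (starRingEnd ℂ) v = 2 * (cv : ℂ) := by
    rw [Complex.add_conj]; norm_num [hcv]
  have hVV : v * (starRingEnd ℂ) v = 1 := conj_mul_oneVK hvnorm
  have hid : qVK a b c = c^2 * (-((2*(1+(cv:ℂ))*w - 1) * (2*(1-(cv:ℂ))*w + 1))) := by
    simp only [qVK]
    rw [hA, hB, hU]
    linear_combination (w^2*c^2*(v + (starRingEnd ℂ) v + 2*(cv:ℂ)) - 2*w*c^2) * hVsum +
      (-4*w^2*c^2) * hVV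
  have h5 : ‖qVK a b c‖ = ‖2*(1+(cv:ℂ))*w - 1‖ * ‖2*(1-(cv:ℂ))*w + 1‖ := by
    rw [hid]; simp [norm_mul, hc]
  have hX : ‖2*(1+(cv:ℂ))*w - 1‖^2 = 4*(1+cv)^2 - 4*(1+cv)*r + 1 := by
    rw [norm_sq_eqVK]
    simp [Complex.sub_re, Complex.sub_im, Complex.mul_re, Complex.mul_im, Complex.add_re,
      Complex.add_im, Complex.one_re, Complex.one_im, Complex.ofReal_re, Complex.ofReal_im,
      ← hr, ← hs]
    linear_combination (4*(1+cv)^2) * hw1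
  have hY : ‖2*(1-(cv:ℂ))*w + 1‖^2 = 4*(1-cv)^2 + 4*(1-cv)*r + 1 := by
    rw [norm_sq_eqVK]
    simp [Complex.sub_re, Complex.sub_im, Complex.mul_re, Complex.mul_im, Complex.add_re,
      Complex.add_im, Complex.one_re, Complex.one_im, Complex.ofReal_re, Complex.ofReal_im,
      ← hr, ← hs]
    linear_combination (4*(1-cv)^2) * hw1
  have hc2 : cv^2 ≤ 1 := by nlinarith [sq_nonneg sv]
  have hr2 : r^2 ≤ 1 := by nlinarith [sq_nonneg s]
  have hkey := keyVK cv r hc2 hr2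
  have hnn : 0 ≤ ‖qVK a b c‖ := norm_nonneg _
  nlinarith [norm_nonneg (2*(1+(cv:ℂ))*w - 1), norm_nonneg (2*(1-(cv:ℂ))*w + 1),
    sq_nonneg (‖2*(1+(cv:ℂ))*w - 1‖ * ‖2*(1-(cv:ℂ))*w + 1‖ - 5)]

lemma stepVK {C : ℝ} (g : ℂ → ℂ) (hg : Differentiable ℂ g)
    (h : ∀ w : ℂ, ‖w‖ = 1 → ‖g w‖ ≤ C) : ∀ w : ℂ, ‖w‖ ≤ 1 → ‖g w‖ ≤ C := by
  intro w hw
  apply Complex.norm_le_of_forall_mem_frontier_norm_le (U := Metric.ball (0:ℂ) 1)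
    Metric.isBounded_ball hg.diffContOnCl
  · intro z hz
    rw [frontier_ball _ one_ne_zero] at hz
    exact h z (by simpa using hz)
  · rw [closure_ball _ one_ne_zero]
    simpa using hw

lemma qboundVK (a b c : ℂ) (ha : ‖a‖ ≤ 1) (hb : ‖b‖ ≤ 1) (hc : ‖c‖ ≤ 1) :
    ‖qVK a b c‖ ≤ 5 := by
  refine stepVK (fun w => qVK w b c) (by unfold qVK; fun_prop) (fun a' ha' => ?_) a ha
  refine stepVK (fun w => qVK a' w c) (by unfold qVK; fun_prop) (fun b' hb' => ?_) b hb
  refine stepVK (fun w => qVK a' b' w) (by unfold qVK; fun_prop) (fun c' hc' => ?_) c hc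
  exact torusVK a' b' c' ha' hb' hc'

/-- The supremum norm of the Varopoulos–Kaijser polynomial over the closed unit
polydisc equals `5`. -/
theorem stmt9 :
    IsGreatest {x : ℝ | ∃ z : Fin 3 → ℂ, (∀ i, ‖z i‖ ≤ 1) ∧ x = ‖pV z‖} 5 := by
  constructor
  · refine ⟨![1, 1, -1], ?_, ?_⟩
    · intro i
      fin_cases i <;> simp
    · have : pV ![1, 1, -1] = 5 := by
        simp [pV]
        ring
      rw [this]
      simp
  · rintro x ⟨z, hz, rfl⟩
    have : pV z = qVK (z 0) (z 1) (z 2) := rfl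
    rw [this]
    exact qboundVK _ _ _ (hz 0) (hz 1) (hz 2)
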